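/- For n = s + r with s ≥ r ≥ 1, the number of permutations π ∈ S_n with LIS(π) = 2, LDS(π) = s, and exactly C(s,2)+C(r,2) inversions (the minimum) is 1 if s = r and 2 if s > r, and these permutations are exactly (s,...,1,s+r,...,s+1) and (r,...,1,s+r,...,r+1). -/

import Mathlib

/-- The number of inversions of a permutation of `Fin n`:
pairs of positions `i < j` with `π i > π j`. -/
def invCount {n : ℕ} (π : Equiv.Perm (Fin n)) : ℕ :=
  (Finset.univ.filter fun p : Fin n × Fin n => p.1 < p.2 ∧ π p.2 < π p.1).card

/-- The length of the longest (strictly) increasing subsequence of `π`. -/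
noncomputable def lisLen {n : ℕ} (π : Equiv.Perm (Fin n)) : ℕ :=
  sSup {k | ∃ t : Finset (Fin n), t.card = k ∧ StrictMonoOn ⇑π ↑t}

/-- The length of the longest (strictly) decreasing subsequence of `π`. -/
noncomputable def ldsLen {n : ℕ} (π : Equiv.Perm (Fin n)) : ℕ :=
  sSup {k | ∃ t : Finset (Fin n), t.card = k ∧ StrictAntiOn ⇑π ↑t}

open Finset

def layeredFun (n a : ℕ) : Fin n → Fin n := fun i =>
  if _h : (i : ℕ) < a ∧ a ≤ n then ⟨a - 1 - (i : ℕ), by omega⟩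
  else if _h2 : a ≤ (i : ℕ) then ⟨a + n - 1 - (i : ℕ), by have := i.isLt; omega⟩
  else i

lemma layeredFun_val' (n a : ℕ) (i : Fin n) :
    ((layeredFun n a i : Fin n) : ℕ) =
      if (i : ℕ) < a ∧ a ≤ n then a - 1 - (i : ℕ)
      else if a ≤ (i : ℕ) then a + n - 1 - (i : ℕ) else (i : ℕ) := by
  unfold layeredFun
  split
  · rfl
  · split <;> rfl

lemma layeredFun_val (n a : ℕ) (ha : a ≤ n) (i : Fin n) :
    ((layeredFun n a i : Fin n) : ℕ) =
      if (i : ℕ) < a then a - 1 - (i : ℕ) else a + n - 1 - (i : ℕ) := by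
  rw [layeredFun_val']
  split_ifs <;> omega

lemma layeredFun_invol (n a : ℕ) : Function.Involutive (layeredFun n a) := by
  intro i
  apply Fin.val_injective
  rw [layeredFun_val' n a (layeredFun n a i), layeredFun_val']
  have hi := i.isLt
  split_ifs <;> omega

def layered (n a : ℕ) : Equiv.Perm (Fin n) := (layeredFun_invol n a).toPerm

lemma layered_val (n a : ℕ) (ha : a ≤ n) (i : Fin n) :
    ((layered n a i : Fin n) : ℕ) =
      if (i : ℕ) < a then a - 1 - (i : ℕ) else a + n - 1 - (i : ℕ) := by
  show ((layeredFun n a i : Fin n) : ℕ) = _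
  exact layeredFun_val n a ha i

lemma layered_mul_self (n a : ℕ) : layered n a * layered n a = 1 := by
  ext i
  simp [layered, Equiv.Perm.mul_apply, Function.Involutive.coe_toPerm,
    layeredFun_invol n a i]

lemma card_val_lt (n a : ℕ) (ha : a ≤ n) :
    (Finset.univ.filter fun i : Fin n => (i : ℕ) < a).card = a := by
  apply Finset.card_eq_of_bijective (fun k hk => ⟨k, lt_of_lt_of_le hk ha⟩)
  · intro i hi
    simp only [mem_filter, mem_univ, true_and] at hi
    exact ⟨i, hi, rfl⟩
  · intro k hk; simp [hk]
  · intro k l hk hl h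
    simpa using congrArg Fin.val h

lemma card_ordered_pairs {n : ℕ} (t : Finset (Fin n)) :
    (Finset.univ.filter fun p : Fin n × Fin n =>
      p.1 < p.2 ∧ p.1 ∈ t ∧ p.2 ∈ t).card = t.card.choose 2 := by
  rw [← Finset.card_powersetCard 2 t]
  apply Finset.card_bij (fun p _ => ({p.1, p.2} : Finset (Fin n)))
  · intro p hp
    simp only [mem_filter, mem_univ, true_and] at hp
    rw [Finset.mem_powersetCard]
    refine ⟨?_, ?_⟩
    · intro x hx; simp only [mem_insert, mem_singleton] at hx
      rcases hx with rfl | rfl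
      exacts [hp.2.1, hp.2.2]
    · rw [Finset.card_insert_of_notMem (by simp [hp.1.ne]), Finset.card_singleton]
  · intro p hp q hq h
    simp only [mem_filter, mem_univ, true_and] at hp hq
    have h1 : p.1 ∈ ({q.1, q.2} : Finset (Fin n)) := by rw [← h]; simp
    have h2 : p.2 ∈ ({q.1, q.2} : Finset (Fin n)) := by rw [← h]; simp
    simp only [mem_insert, mem_singleton] at h1 h2
    have hp1 := hp.1; have hq1 := hq.1
    rcases h1 with e1 | e1 <;> rcases h2 with e2 | e2
    · exact absurd (e2 ▸ e1 ▸ hp1) (lt_irrefl _)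
    · exact Prod.ext e1 e2
    · -- p.1 = q.2, p.2 = q.1
      rw [e1, e2] at hp1; exact absurd (hp1.trans hq1) (lt_irrefl _)
    · exact absurd (e2 ▸ e1 ▸ hp1) (lt_irrefl _)
  · intro u hu
    rw [Finset.mem_powersetCard] at hu
    obtain ⟨x, y, hxy, rfl⟩ := Finset.card_eq_two.mp hu.2
    have hx : x ∈ t := hu.1 (by simp)
    have hy : y ∈ t := hu.1 (by simp)
    rcases lt_or_gt_of_ne hxy with h | h
    · exact ⟨(x, y), by simp [mem_filter, h, hx, hy], rfl⟩
    · exact ⟨(y, x), by simp [mem_filter, h, hx, hy], by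
        simp [Finset.pair_comm]⟩

section SSup
variable {n : ℕ} (π : Equiv.Perm (Fin n))

lemma lis_bdd : BddAbove {k | ∃ t : Finset (Fin n), t.card = k ∧ StrictMonoOn ⇑π ↑t} := by
  refine ⟨n, fun k hk => ?_⟩
  obtain ⟨t, ht, -⟩ := hk
  simpa [← ht] using (Finset.card_le_univ t)

lemma lds_bdd : BddAbove {k | ∃ t : Finset (Fin n), t.card = k ∧ StrictAntiOn ⇑π ↑t} := by
  refine ⟨n, fun k hk => ?_⟩
  obtain ⟨t, ht, -⟩ := hk
  simpa [← ht] using (Finset.card_le_univ t)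

lemma lis_nonempty : Set.Nonempty {k | ∃ t : Finset (Fin n), t.card = k ∧ StrictMonoOn ⇑π ↑t} :=
  ⟨0, ∅, by simp, by intro x hx; simp at hx⟩

lemma lds_nonempty : Set.Nonempty {k | ∃ t : Finset (Fin n), t.card = k ∧ StrictAntiOn ⇑π ↑t} :=
  ⟨0, ∅, by simp, by intro x hx; simp at hx⟩

lemma card_le_lisLen {t : Finset (Fin n)} (h : StrictMonoOn ⇑π ↑t) : t.card ≤ lisLen π :=
  le_csSup (lis_bdd π) ⟨t, rfl, h⟩

lemma card_le_ldsLen {t : Finset (Fin n)} (h : StrictAntiOn ⇑π ↑t) : t.card ≤ ldsLen π :=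
  le_csSup (lds_bdd π) ⟨t, rfl, h⟩

lemma lisLen_le {m : ℕ} (h : ∀ t : Finset (Fin n), StrictMonoOn ⇑π ↑t → t.card ≤ m) :
    lisLen π ≤ m := by
  apply csSup_le (lis_nonempty π)
  rintro k ⟨t, rfl, hm⟩
  exact h t hm

lemma ldsLen_le {m : ℕ} (h : ∀ t : Finset (Fin n), StrictAntiOn ⇑π ↑t → t.card ≤ m) :
    ldsLen π ≤ m := by
  apply csSup_le (lds_nonempty π)
  rintro k ⟨t, rfl, hm⟩
  exact h t hm

lemma exists_lds : ∃ t : Finset (Fin n), t.card = ldsLen π ∧ StrictAntiOn ⇑π ↑t :=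
  Nat.sSup_mem (lds_nonempty π) (lds_bdd π)

end SSup

lemma strictMonoOn_pair {n : ℕ} {f : Fin n → Fin n} {x y : Fin n}
    (hxy : x < y) (hf : f x < f y) : StrictMonoOn f ↑({x, y} : Finset (Fin n)) := by
  intro u hu v hv huv
  simp only [Finset.coe_insert, Finset.coe_singleton, Set.mem_insert_iff,
    Set.mem_singleton_iff] at hu hv
  rcases hu with rfl | rfl <;> rcases hv with rfl | rfl
  · exact absurd huv (lt_irrefl _)
  · exact hf
  · exact absurd (huv.trans hxy) (lt_irrefl _)
  · exact absurd huv (lt_irrefl _)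

lemma strictMonoOn_triple {n : ℕ} {f : Fin n → Fin n} {x y z : Fin n}
    (hxy : x < y) (hyz : y < z) (f1 : f x < f y) (f2 : f y < f z) :
    StrictMonoOn f ↑({x, y, z} : Finset (Fin n)) := by
  intro u hu v hv huv
  simp only [Finset.coe_insert, Finset.coe_singleton, Set.mem_insert_iff,
    Set.mem_singleton_iff] at hu hv
  rcases hu with rfl | rfl | rfl <;> rcases hv with rfl | rfl | rfl <;>
    first
      | exact absurd huv (lt_irrefl _)
      | exact f1
      | exact f2
      | exact f1.trans f2
      | exact absurd (huv.trans hxy) (lt_irrefl _)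
      | exact absurd (huv.trans hyz) (lt_irrefl _)
      | exact absurd (huv.trans (hxy.trans hyz)) (lt_irrefl _)

lemma lis_layered (n a : ℕ) (h1 : 1 ≤ a) (h2 : a < n) : lisLen (layered n a) = 2 := by
  have han : a ≤ n := h2.le
  apply le_antisymm
  · apply lisLen_le
    intro t ht
    have : t.card ≤ (Finset.univ : Finset Bool).card := by
      refine Finset.card_le_card_of_injOn (fun i => decide ((i : ℕ) < a)) (fun _ _ => Finset.mem_univ _) ?_
      intro u hu v hv huv
      simp only [Finset.mem_coe] at hu hv
      by_contra hne
      rcases lt_or_gt_of_ne hne with hlt | hlt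
      · have hm := ht hu hv hlt
        have h1' := layered_val n a han u
        have h2' := layered_val n a han v
        have hval : ((layered n a u : Fin n) : ℕ) < ((layered n a v : Fin n) : ℕ) := hm
        have hd : ((u : ℕ) < a) ↔ ((v : ℕ) < a) := (decide_eq_decide).mp huv
        have hu' := u.isLt; have hv' := v.isLt
        have huvlt : (u : ℕ) < (v : ℕ) := hlt
        rw [h1', h2'] at hval
        by_cases hc : (u : ℕ) < a
        · have : (v : ℕ) < a := by rw [← hd]; exact hc
          simp [hc, this] at hval; omega
        · have : ¬ (v : ℕ) < a := by rw [← hd]; exact hc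
          simp [hc, this] at hval; omega
      · have hm := ht hv hu hlt
        have h1' := layered_val n a han u
        have h2' := layered_val n a han v
        have hval : ((layered n a v : Fin n) : ℕ) < ((layered n a u : Fin n) : ℕ) := hm
        have hd : ((u : ℕ) < a) ↔ ((v : ℕ) < a) := (decide_eq_decide).mp huv
        have hu' := u.isLt; have hv' := v.isLt
        have huvlt : (v : ℕ) < (u : ℕ) := hlt
        rw [h1', h2'] at hval
        by_cases hc : (u : ℕ) < a
        · have : (v : ℕ) < a := by rw [← hd]; exact hc
          simp [hc, this] at hval; omega
        · have : ¬ (v : ℕ) < a := by rw [← hd]; exact hc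
          simp [hc, this] at hval; omega
    simpa using this
  · have e1 : (⟨a - 1, by omega⟩ : Fin n) < ⟨a, h2⟩ := by
      simp [Fin.lt_def]; omega
    have e2 : layered n a ⟨a - 1, by omega⟩ < layered n a ⟨a, h2⟩ := by
      rw [Fin.lt_def, layered_val n a han, layered_val n a han]
      simp only [Fin.val_mk]
      split_ifs <;> omega
    have hcard : ({⟨a - 1, by omega⟩, ⟨a, h2⟩} : Finset (Fin n)).card = 2 := by
      rw [Finset.card_insert_of_notMem (by simp [Fin.ext_iff]; omega), Finset.card_singleton]
    calc 2 = ({⟨a - 1, by omega⟩, ⟨a, h2⟩} : Finset (Fin n)).card := hcard.symm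
    _ ≤ lisLen (layered n a) := card_le_lisLen _ (strictMonoOn_pair e1 e2)

lemma anti_block1 (n a : ℕ) (han : a ≤ n) :
    StrictAntiOn ⇑(layered n a) ↑(Finset.univ.filter fun i : Fin n => (i : ℕ) < a) := by
  intro u hu v hv huv
  simp only [Finset.coe_filter, Set.mem_setOf_eq, Finset.mem_univ, true_and] at hu hv
  rw [Fin.lt_def, layered_val n a han, layered_val n a han]
  have huv' : (u : ℕ) < (v : ℕ) := huv
  simp only [if_pos hu, if_pos hv]
  omega

lemma anti_block2 (n a : ℕ) (han : a ≤ n) :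
    StrictAntiOn ⇑(layered n a) ↑(Finset.univ.filter fun i : Fin n => ¬ (i : ℕ) < a) := by
  intro u hu v hv huv
  simp only [Finset.coe_filter, Set.mem_setOf_eq, Finset.mem_univ, true_and] at hu hv
  rw [Fin.lt_def, layered_val n a han, layered_val n a han]
  have huv' : (u : ℕ) < (v : ℕ) := huv
  have := u.isLt; have := v.isLt
  simp only [if_neg hu, if_neg hv]
  omega

lemma lds_layered (n a : ℕ) (h1 : 1 ≤ a) (h2 : a < n) :
    ldsLen (layered n a) = max a (n - a) := by
  have han : a ≤ n := h2.le
  apply le_antisymm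
  · apply ldsLen_le
    intro t ht
    by_cases hc : ∀ i ∈ t, (i : ℕ) < a
    · have : t ⊆ Finset.univ.filter fun i : Fin n => (i : ℕ) < a := by
        intro i hi; simp [hc i hi]
      calc t.card ≤ _ := Finset.card_le_card this
      _ = a := card_val_lt n a han
      _ ≤ max a (n - a) := le_max_left _ _
    · push_neg at hc
      obtain ⟨v, hvt, hva⟩ := hc
      have hall : ∀ i ∈ t, ¬ (i : ℕ) < a := by
        intro u hut hua
        have hva' : ¬ (v : ℕ) < a := not_lt.mpr hva
        have huv : u < v := by rw [Fin.lt_def]; omega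
        have hanti := ht hut hvt huv
        rw [Fin.lt_def, layered_val n a han, layered_val n a han] at hanti
        have hu' := u.isLt; have hv' := v.isLt
        rw [if_pos hua, if_neg hva'] at hanti
        omega
      have : t ⊆ Finset.univ.filter fun i : Fin n => ¬ (i : ℕ) < a := by
        intro i hi
        simp only [Finset.mem_filter, Finset.mem_univ, true_and]
        exact hall i hi
      have hcard2 : (Finset.univ.filter fun i : Fin n => ¬ (i : ℕ) < a).card = n - a := by
        have h := Finset.card_filter_add_card_filter_not
          (s := (Finset.univ : Finset (Fin n))) (p := fun i : Fin n => (i : ℕ) < a)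
        rw [card_val_lt n a han] at h
        simp only [Finset.card_univ, Fintype.card_fin] at h
        omega
      calc t.card ≤ _ := Finset.card_le_card this
      _ = n - a := hcard2
      _ ≤ max a (n - a) := le_max_right _ _
  · apply max_le
    · calc a = (Finset.univ.filter fun i : Fin n => (i : ℕ) < a).card := (card_val_lt n a han).symm
      _ ≤ _ := card_le_ldsLen _ (anti_block1 n a han)
    · have hcard2 : (Finset.univ.filter fun i : Fin n => ¬ (i : ℕ) < a).card = n - a := by
        have h := Finset.card_filter_add_card_filter_not
          (s := (Finset.univ : Finset (Fin n))) (p := fun i : Fin n => (i : ℕ) < a)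
        rw [card_val_lt n a han] at h
        simp only [Finset.card_univ, Fintype.card_fin] at h
        omega
      calc n - a = (Finset.univ.filter fun i : Fin n => ¬ (i : ℕ) < a).card := hcard2.symm
      _ ≤ _ := card_le_ldsLen _ (anti_block2 n a han)

lemma inv_layered (n a : ℕ) (han : a ≤ n) :
    invCount (layered n a) = a.choose 2 + (n - a).choose 2 := by
  unfold invCount
  have hiff : ∀ p : Fin n × Fin n,
      (p.1 < p.2 ∧ layered n a p.2 < layered n a p.1) ↔
      ((p.1 < p.2 ∧ p.1 ∈ (Finset.univ.filter fun i : Fin n => (i : ℕ) < a)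
          ∧ p.2 ∈ (Finset.univ.filter fun i : Fin n => (i : ℕ) < a)) ∨
       (p.1 < p.2 ∧ p.1 ∈ (Finset.univ.filter fun i : Fin n => ¬ (i : ℕ) < a)
          ∧ p.2 ∈ (Finset.univ.filter fun i : Fin n => ¬ (i : ℕ) < a))) := by
    intro p
    have h1 := p.1.isLt; have h2 := p.2.isLt
    simp only [Finset.mem_filter, Finset.mem_univ, true_and, Fin.lt_def,
      layered_val n a han]
    constructor
    · rintro ⟨hlt, hinv⟩
      by_cases c1 : (p.1 : ℕ) < a <;> by_cases c2 : (p.2 : ℕ) < a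
      · exact Or.inl ⟨hlt, c1, c2⟩
      · simp only [if_pos c1, if_neg c2] at hinv; omega
      · omega
      · exact Or.inr ⟨hlt, c1, c2⟩
    · rintro (⟨hlt, c1, c2⟩ | ⟨hlt, c1, c2⟩)
      · refine ⟨hlt, ?_⟩; simp only [if_pos c1, if_pos c2]; omega
      · refine ⟨hlt, ?_⟩; simp only [if_neg c1, if_neg c2]; omega
  rw [Finset.filter_congr (fun p _ => hiff p), Finset.filter_or,
    Finset.card_union_of_disjoint]
  · rw [card_ordered_pairs, card_ordered_pairs, card_val_lt n a han]
    congr 2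
    have h := Finset.card_filter_add_card_filter_not
      (s := (Finset.univ : Finset (Fin n))) (p := fun i : Fin n => (i : ℕ) < a)
    rw [card_val_lt n a han] at h
    simp only [Finset.card_univ, Fintype.card_fin] at h
    omega
  · rw [Finset.disjoint_left]
    rintro p hp hq
    simp only [Finset.mem_filter, Finset.mem_univ, true_and] at hp hq
    exact hq.2.1 hp.2.1

lemma arith_core (s r a b x y X : ℕ) (hr : 1 ≤ r) (hrs : r ≤ s)
    (hab : a + b = s + r) (ha : a ≤ s) (hb : b ≤ s)
    (hxy : x + y = s) (hx : x ≤ a) (hy : y ≤ b)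
    (hX : X + s * r = a * b) (hXxy : x * y ≤ X) :
    X = 0 ∧ (a = s ∨ a = r) := by
  -- introduce t, u, p, q
  have har : r ≤ a := by omega
  obtain ⟨t, hts⟩ : ∃ t, a = r + t := ⟨a - r, by omega⟩
  obtain ⟨u, hus⟩ : ∃ u, s = a + u := ⟨s - a, by omega⟩
  have hxt : t ≤ x := by omega
  have hyu : u ≤ y := by omega
  obtain ⟨p, hps⟩ : ∃ p, x = t + p := ⟨x - t, by omega⟩
  obtain ⟨q, hqs⟩ : ∃ q, y = u + q := ⟨y - u, by omega⟩
  have hpq : p + q = r := by omega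
  have hXtu : X = t * u := by
    have hb' : b = r + u := by omega
    subst hts hqs hps hb'
    zify at hX ⊢
    nlinarith [hX]
  have hZ : t * q + (p * u + p * q) = 0 := by
    have e : x * y = t * u + (t * q + (p * u + p * q)) := by
      subst hps hqs; ring
    rw [hXtu] at hXxy
    omega
  have h1 : t * q = 0 := by omega
  have h2 : p * u = 0 := by omega
  rcases Nat.mul_eq_zero.mp h1 with ht0 | hq0
  · subst ht0
    exact ⟨by simp [hXtu], Or.inr (by omega)⟩
  · have hp : p = r := by omega
    have hu0 : u = 0 := by
      rcases Nat.mul_eq_zero.mp h2 with h | h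
      · omega
      · exact h
    subst hu0
    exact ⟨by simp [hXtu], Or.inl (by omega)⟩

lemma perm_le_apply_of_strictMono {m : ℕ} (e : Equiv.Perm (Fin m)) (he : StrictMono ⇑e)
    (i : Fin m) : (i : ℕ) ≤ (e i : ℕ) := by
  have hsub : (Finset.univ.filter fun k : Fin m => (k : ℕ) < (i : ℕ)).image ⇑e ⊆
      Finset.univ.filter fun k : Fin m => (k : ℕ) < (e i : ℕ) := by
    intro k hk
    simp only [Finset.mem_image, Finset.mem_filter, Finset.mem_univ, true_and] at hk ⊢
    obtain ⟨j, hj, rfl⟩ := hk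
    exact he (by rwa [Fin.lt_def])
  have h1 : ((Finset.univ.filter fun k : Fin m => (k : ℕ) < (i : ℕ)).image ⇑e).card
      = (i : ℕ) := by
    rw [Finset.card_image_of_injective _ e.injective, card_val_lt m i i.isLt.le]
  have h2 := Finset.card_le_card hsub
  rw [h1, card_val_lt m (e i) (e i).isLt.le] at h2
  exact h2

lemma perm_eq_one_of_strictMono {m : ℕ} (e : Equiv.Perm (Fin m)) (he : StrictMono ⇑e) :
    e = 1 := by
  have hinv : StrictMono ⇑e⁻¹ := by
    intro i j hij
    by_contra h
    push_neg at h
    rcases eq_or_lt_of_le h with h' | h'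
    · exact absurd (e⁻¹.injective h'.symm) (ne_of_lt hij)
    · have := he h'
      simp only [Equiv.Perm.coe_inv, Equiv.apply_symm_apply] at this
      exact absurd (hij.trans this) (lt_irrefl _)
  apply Equiv.ext
  intro i
  have h1 := perm_le_apply_of_strictMono e he i
  have h2 := perm_le_apply_of_strictMono e⁻¹ hinv (e i)
  simp only [Equiv.Perm.coe_inv, Equiv.symm_apply_apply] at h2
  have : (e i : ℕ) = (i : ℕ) := by omega
  exact Fin.val_injective (by simpa using this)

lemma choose2_identity (a b s r X : ℕ) (hab : a + b = s + r)
    (h : a.choose 2 + b.choose 2 + X = s.choose 2 + r.choose 2) :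
    X + s * r = a * b := by
  have e : ∀ m : ℕ, 2 * m.choose 2 + m = m * m := by
    intro m
    induction m with
    | zero => rfl
    | succ k ih =>
      rw [Nat.choose_succ_succ, Nat.choose_one_right]
      ring_nf
      ring_nf at ih
      omega
  have ea := e a; have eb := e b; have es := e s; have er := e r
  have key : a * a + b * b + 2 * X = s * s + r * r := by linarith
  zify at key hab ⊢
  have h2 : (2 : ℤ) * X + 2 * (s * r) = 2 * (a * b) := by linear_combination key - (a + b + s + r) * hab
  linarith

lemma forward_struct (s r : ℕ) (hr : 1 ≤ r) (hrs : r ≤ s) (π : Equiv.Perm (Fin (s + r)))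
    (h2 : lisLen π = 2) (h3 : ldsLen π = s)
    (h4 : invCount π = s.choose 2 + r.choose 2) :
    π = layered (s + r) s ∨ π = layered (s + r) r := by
  have hs1 : 1 ≤ s := le_trans hr hrs
  -- basic consequences of lisLen / ldsLen
  have no3 : ∀ t : Finset (Fin (s + r)), StrictMonoOn ⇑π ↑t → t.card ≤ 2 := by
    intro t ht
    have := card_le_lisLen π ht
    omega
  have lds_ub : ∀ t : Finset (Fin (s + r)), StrictAntiOn ⇑π ↑t → t.card ≤ s := by
    intro t ht
    have := card_le_ldsLen π ht
    omega
  obtain ⟨D, hDcard, hDanti⟩ := exists_lds π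
  rw [h3] at hDcard
  -- the two decreasing blocks
  set pA : Fin (s + r) → Prop := fun i => ∀ j, j < i → π i < π j with hpA
  have hdecA : DecidablePred pA := fun i => by unfold pA; infer_instance
  set A : Finset (Fin (s + r)) := Finset.univ.filter pA with hA
  set B : Finset (Fin (s + r)) := Finset.univ.filter (fun i => ¬ pA i) with hB
  have memA : ∀ i, i ∈ A ↔ pA i := by intro i; simp [hA]
  have memB : ∀ i, i ∈ B ↔ ¬ pA i := by intro i; simp [hB]
  have hA_anti : StrictAntiOn ⇑π ↑A := by
    intro u hu v hv huv
    rw [Finset.mem_coe, memA] at hu hv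
    exact hv u huv
  have hB_anti : StrictAntiOn ⇑π ↑B := by
    intro u hu v hv huv
    rw [Finset.mem_coe, memB] at hu hv
    by_contra hc
    have huvne : π u ≠ π v := fun h => (ne_of_lt huv) (π.injective h)
    have hlt : π u < π v := lt_of_le_of_ne (not_lt.mp hc) huvne
    have hu' : ∃ j, j < u ∧ ¬ (π u < π j) := by
      by_contra hno
      push_neg at hno
      exact hu (fun j hj => hno j hj)
    obtain ⟨k, hk, hk2⟩ := hu' 
    have hkne : π k ≠ π u := fun h => (ne_of_lt hk) (π.injective h)
    have hklt : π k < π u := lt_of_le_of_ne (not_lt.mp hk2) hkne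
    have htriple := strictMonoOn_triple hk huv hklt hlt
    have hcard : ({k, u, v} : Finset (Fin (s + r))).card = 3 := by
      rw [Finset.card_insert_of_notMem, Finset.card_insert_of_notMem, Finset.card_singleton]
      · simp only [Finset.mem_singleton]
        exact ne_of_lt huv
      · simp only [Finset.mem_insert, Finset.mem_singleton]
        push_neg
        exact ⟨ne_of_lt hk, ne_of_lt (hk.trans huv)⟩
    have := no3 _ htriple
    omega
  have ha_le : A.card ≤ s := lds_ub A hA_anti
  have hb_le : B.card ≤ s := lds_ub B hB_anti
  have hab : A.card + B.card = (s + r) := by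
    have := Finset.card_filter_add_card_filter_not
      (s := (Finset.univ : Finset (Fin (s + r)))) (p := pA)
    simpa using this
  -- inversion counting
  set I : Finset (Fin (s + r) × Fin (s + r)) :=
    Finset.univ.filter (fun p : Fin (s + r) × Fin (s + r) => p.1 < p.2 ∧ π p.2 < π p.1) with hI
  have hIcard : I.card = s.choose 2 + r.choose 2 := h4
  set c1 : Fin (s + r) × Fin (s + r) → Prop := fun p => pA p.1 ∧ pA p.2 with hc1
  set c2 : Fin (s + r) × Fin (s + r) → Prop := fun p => ¬ pA p.1 ∧ ¬ pA p.2 with hc2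
  have split1 : I.card = (I.filter c1).card + (I.filter fun p => ¬ c1 p).card :=
    (Finset.card_filter_add_card_filter_not (s := I) (p := c1)).symm
  have split2 : (I.filter fun p => ¬ c1 p).card =
      ((I.filter fun p => ¬ c1 p).filter c2).card +
      ((I.filter fun p => ¬ c1 p).filter fun p => ¬ c2 p).card :=
    (Finset.card_filter_add_card_filter_not
      (s := I.filter fun p => ¬ c1 p) (p := c2)).symm
  have e1 : I.filter c1 =
      Finset.univ.filter (fun p : Fin (s + r) × Fin (s + r) => p.1 < p.2 ∧ p.1 ∈ A ∧ p.2 ∈ A) := by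
    ext p
    simp only [hI, Finset.filter_filter, Finset.mem_filter, Finset.mem_univ, true_and, memA]
    constructor
    · rintro ⟨⟨hlt, _⟩, hc⟩
      exact ⟨hlt, hc⟩
    · rintro ⟨hlt, hp1, hp2⟩
      refine ⟨⟨hlt, ?_⟩, hp1, hp2⟩
      exact hA_anti (by rw [Finset.mem_coe, memA]; exact hp1)
        (by rw [Finset.mem_coe, memA]; exact hp2) hlt
  have e2 : (I.filter fun p => ¬ c1 p).filter c2 =
      Finset.univ.filter (fun p : Fin (s + r) × Fin (s + r) => p.1 < p.2 ∧ p.1 ∈ B ∧ p.2 ∈ B) := by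
    ext p
    simp only [hI, Finset.filter_filter, Finset.mem_filter, Finset.mem_univ, true_and,
      memB, hc1, hc2]
    constructor
    · rintro ⟨⟨hlt, _⟩, _, hp1, hp2⟩
      exact ⟨hlt, hp1, hp2⟩
    · rintro ⟨hlt, hp1, hp2⟩
      refine ⟨⟨hlt, ?_⟩, ?_, hp1, hp2⟩
      · exact hB_anti (by rw [Finset.mem_coe, memB]; exact hp1)
          (by rw [Finset.mem_coe, memB]; exact hp2) hlt
      · rintro ⟨hq, -⟩; exact hp1 hq
  set X : ℕ := ((I.filter fun p => ¬ c1 p).filter fun p => ¬ c2 p).card with hX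
  have hcount : A.card.choose 2 + B.card.choose 2 + X = s.choose 2 + r.choose 2 := by
    rw [← hIcard, split1, split2, e1, e2, card_ordered_pairs, card_ordered_pairs]
    ring
  have hXab : X + s * r = A.card * B.card := choose2_identity _ _ _ _ _ hab hcount
  -- the decreasing witness D split
  set DA : Finset (Fin (s + r)) := D.filter pA with hDA
  set DB : Finset (Fin (s + r)) := D.filter (fun i => ¬ pA i) with hDB
  have hxy : DA.card + DB.card = s := by
    rw [hDA, hDB, Finset.card_filter_add_card_filter_not, hDcard]
  have hx_le : DA.card ≤ A.card := by
    apply Finset.card_le_card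
    intro i hi
    rw [hDA, Finset.mem_filter] at hi
    rw [memA]; exact hi.2
  have hy_le : DB.card ≤ B.card := by
    apply Finset.card_le_card
    intro i hi
    rw [hDB, Finset.mem_filter] at hi
    rw [memB]; exact hi.2
  have hprod : DA.card * DB.card ≤ X := by
    rw [← Finset.card_product]
    rw [hX]
    apply Finset.card_le_card_of_injOn
      (fun p : Fin (s + r) × Fin (s + r) => if p.1 < p.2 then p else (p.2, p.1))
    · intro p hp
      rw [Finset.mem_coe, Finset.mem_product] at hp
      obtain ⟨hp1, hp2⟩ := hp
      rw [hDA, Finset.mem_filter] at hp1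
      rw [hDB, Finset.mem_filter] at hp2
      have hne : p.1 ≠ p.2 := fun h => hp2.2 (h ▸ hp1.2)
      simp only [Finset.mem_coe]
      rcases lt_or_gt_of_ne hne with hlt | hlt
      · rw [if_pos hlt]
        simp only [Finset.mem_filter, Finset.mem_univ, true_and, hI, hc1, hc2]
        refine ⟨⟨⟨hlt, ?_⟩, ?_⟩, ?_⟩
        · exact hDanti (Finset.mem_coe.mpr hp1.1) (Finset.mem_coe.mpr hp2.1) hlt
        · rintro ⟨-, hq⟩; exact hp2.2 hq
        · rintro ⟨hq, -⟩; exact hq hp1.2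
      · rw [if_neg (not_lt.mpr hlt.le)]
        simp only [Finset.mem_filter, Finset.mem_univ, true_and, hI, hc1, hc2]
        refine ⟨⟨⟨hlt, ?_⟩, ?_⟩, ?_⟩
        · exact hDanti (Finset.mem_coe.mpr hp2.1) (Finset.mem_coe.mpr hp1.1) hlt
        · rintro ⟨hq, -⟩; exact hp2.2 hq
        · rintro ⟨-, hq⟩; exact hq hp1.2
    · intro p hp q hq hpq
      simp only [Finset.coe_product, Set.mem_prod, Finset.mem_coe] at hp hq
      obtain ⟨hp1, hp2⟩ := hp
      obtain ⟨hq1, hq2⟩ := hq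
      rw [hDA, Finset.mem_filter] at hp1 hq1
      rw [hDB, Finset.mem_filter] at hp2 hq2
      simp only at hpq
      split_ifs at hpq with h1 h2 h2
      · exact hpq
      · -- p straight, q swapped : p.1 = q.2 contradiction
        have : p.1 = q.2 := congrArg Prod.fst hpq
        exact absurd (this ▸ hp1.2) hq2.2
      · have : p.2 = q.1 := congrArg Prod.fst hpq
        exact absurd (this ▸ hq1.2) hp2.2
      · have ha' : p.2 = q.2 := congrArg Prod.fst hpq
        have hb' : p.1 = q.1 := congrArg Prod.snd hpq
        exact Prod.ext hb' ha'
  -- apply the arithmetic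
  have harith := arith_core s r A.card B.card DA.card DB.card X hr hrs hab ha_le hb_le
    hxy hx_le hy_le hXab hprod
  obtain ⟨hX0, hacases⟩ := harith
  -- cross pairs are non-inversions
  have hcross : ∀ u v : Fin (s + r), u < v → ((pA u ∧ ¬ pA v) ∨ (¬ pA u ∧ pA v)) → π u < π v := by
    intro u v huv hor
    by_contra hc
    have hne : π u ≠ π v := fun h => (ne_of_lt huv) (π.injective h)
    have hlt : π v < π u := lt_of_le_of_ne (not_lt.mp hc) hne.symm
    have hmem : (u, v) ∈ (I.filter fun p => ¬ c1 p).filter fun p => ¬ c2 p := by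
      simp only [Finset.mem_filter, Finset.mem_univ, true_and, hI, hc1, hc2]
      refine ⟨⟨⟨huv, hlt⟩, ?_⟩, ?_⟩
      · rintro ⟨q1, q2⟩
        rcases hor with ⟨-, h⟩ | ⟨h, -⟩ <;> exact h (by assumption)
      · rintro ⟨q1, q2⟩
        rcases hor with ⟨h, -⟩ | ⟨-, h⟩ <;> exact (by assumption : ¬ _) h
    have hX0' : ((I.filter fun p => ¬ c1 p).filter fun p => ¬ c2 p).card = 0 := by
      rw [hX] at hX0; exact hX0
    have := Finset.card_eq_zero.mp hX0'
    rw [this] at hmem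
    exact absurd hmem (Finset.notMem_empty _)
  -- A comes first
  have hinit : ∀ u v : Fin (s + r), pA u → ¬ pA v → u < v := by
    intro u v hu hv
    have hne : u ≠ v := fun h => hv (h ▸ hu)
    rcases lt_or_gt_of_ne hne with h | h
    · exact h
    · exfalso
      have h1 : π v < π u := hcross v u h (Or.inr ⟨hv, hu⟩)
      have h2 : π u < π v := hu v h
      exact absurd (h1.trans h2) (lt_irrefl _)
  set a : ℕ := A.card with haa
  have han : a < (s + r) := by omega
  have hmemA_val : ∀ i : Fin (s + r), pA i ↔ (i : ℕ) < a := by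
    have hFsub : (Finset.univ.filter fun i : Fin (s + r) => (i : ℕ) < a) ⊆ A := by
      intro i hi
      simp only [Finset.mem_filter, Finset.mem_univ, true_and] at hi
      rw [memA]
      by_contra hc
      have hsubA : A ⊆ Finset.univ.filter fun k : Fin (s + r) => (k : ℕ) < (i : ℕ) := by
        intro k hk
        rw [memA] at hk
        simp only [Finset.mem_filter, Finset.mem_univ, true_and]
        exact hinit k i hk hc
      have := Finset.card_le_card hsubA
      rw [card_val_lt (s + r) (i : ℕ) i.isLt.le] at this
      omega
    have hFeq : (Finset.univ.filter fun i : Fin (s + r) => (i : ℕ) < a) = A := by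
      apply Finset.eq_of_subset_of_card_le hFsub
      rw [card_val_lt (s + r) a han.le]
    intro i
    rw [← memA, ← hFeq]
    simp
  -- build the monotone permutation
  have hanle : a ≤ (s + r) := han.le
  have hmono : StrictMono ⇑(π * layered (s + r) a) := by
    intro i j hij
    simp only [Equiv.Perm.mul_apply]
    have hij' : (i : ℕ) < (j : ℕ) := hij
    have hi := i.isLt; have hj := j.isLt
    have hvi := layered_val (s + r) a hanle i
    have hvj := layered_val (s + r) a hanle j
    by_cases hia : (i : ℕ) < a
    · by_cases hja : (j : ℕ) < a
      · -- both in A, layered reverses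
        rw [if_pos hia] at hvi
        rw [if_pos hja] at hvj
        have hlt : layered (s + r) a j < layered (s + r) a i := by rw [Fin.lt_def]; omega
        have hmi : pA (layered (s + r) a i) := (hmemA_val _).mpr (by omega)
        have hmj : pA (layered (s + r) a j) := (hmemA_val _).mpr (by omega)
        exact hA_anti (by rw [Finset.mem_coe, memA]; exact hmj)
          (by rw [Finset.mem_coe, memA]; exact hmi) hlt
      · rw [if_pos hia] at hvi
        rw [if_neg hja] at hvj
        have hmi : pA (layered (s + r) a i) := (hmemA_val _).mpr (by omega)
        have hmj : ¬ pA (layered (s + r) a j) := fun h => by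
          have := (hmemA_val _).mp h
          omega
        exact hcross _ _ (hinit _ _ hmi hmj) (Or.inl ⟨hmi, hmj⟩)
    · have hja : ¬ (j : ℕ) < a := by omega
      rw [if_neg hia] at hvi
      rw [if_neg hja] at hvj
      have hlt : layered (s + r) a j < layered (s + r) a i := by rw [Fin.lt_def]; omega
      have hmi : ¬ pA (layered (s + r) a i) := fun h => by
        have := (hmemA_val _).mp h
        omega
      have hmj : ¬ pA (layered (s + r) a j) := fun h => by
        have := (hmemA_val _).mp h
        omega
      exact hB_anti (by rw [Finset.mem_coe, memB]; exact hmj)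
        (by rw [Finset.mem_coe, memB]; exact hmi) hlt
  have hone : π * layered (s + r) a = 1 := perm_eq_one_of_strictMono _ hmono
  have hπ : π = layered (s + r) a := by
    have h1 : π = (layered (s + r) a)⁻¹ := eq_inv_of_mul_eq_one_left hone
    rw [h1, inv_eq_of_mul_eq_one_left (layered_mul_self (s + r) a)]
  rcases hacases with h | h
  · left; rw [hπ, h]
  · right; rw [hπ, h]

/-- two-column case of Hohlweg's theorem: the permutations with
LIS = 2, LDS = s and the minimal number `C(s,2) + C(r,2)` of inversions are
exactly `(s, …, 1, s+r, …, s+1)` and `(r, …, 1, s+r, …, r+1)` (written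
0-indexed below), and their number is `1` if `s = r` and `2` if `s > r`. -/
theorem stmt_14 (s r : ℕ) (hr : 1 ≤ r) (hrs : r ≤ s) :
    (∀ π : Equiv.Perm (Fin (s + r)),
      (lisLen π = 2 ∧ ldsLen π = s ∧ invCount π = s.choose 2 + r.choose 2) ↔
      ((∀ i : Fin (s + r), (π i : ℕ) =
          if (i : ℕ) < s then s - 1 - (i : ℕ) else 2 * s + r - 1 - (i : ℕ)) ∨
       (∀ i : Fin (s + r), (π i : ℕ) =
          if (i : ℕ) < r then r - 1 - (i : ℕ) else s + 2 * r - 1 - (i : ℕ)))) ∧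
    Nat.card {π : Equiv.Perm (Fin (s + r)) //
        lisLen π = 2 ∧ ldsLen π = s ∧
        invCount π = s.choose 2 + r.choose 2} =
      (if s = r then 1 else 2) := by
  have hs1 : 1 ≤ s := le_trans hr hrs
  have hsn : s ≤ s + r := by omega
  have hrn : r ≤ s + r := by omega
  have hsn' : s < s + r := by omega
  have hrn' : r < s + r := by omega
  -- formula characterizations
  have fs : ∀ π : Equiv.Perm (Fin (s + r)),
      (∀ i : Fin (s + r), (π i : ℕ) =
        if (i : ℕ) < s then s - 1 - (i : ℕ) else 2 * s + r - 1 - (i : ℕ)) ↔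
      π = layered (s + r) s := by
    intro π
    constructor
    · intro h
      apply Equiv.ext
      intro i
      apply Fin.val_injective
      rw [h i, layered_val (s + r) s hsn i]
      have := i.isLt
      split_ifs <;> omega
    · intro h i
      rw [h, layered_val (s + r) s hsn i]
      have := i.isLt
      split_ifs <;> omega
  have fr : ∀ π : Equiv.Perm (Fin (s + r)),
      (∀ i : Fin (s + r), (π i : ℕ) =
        if (i : ℕ) < r then r - 1 - (i : ℕ) else s + 2 * r - 1 - (i : ℕ)) ↔
      π = layered (s + r) r := by
    intro π
    constructor
    · intro h
      apply Equiv.ext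
      intro i
      apply Fin.val_injective
      rw [h i, layered_val (s + r) r hrn i]
      have := i.isLt
      split_ifs <;> omega
    · intro h i
      rw [h, layered_val (s + r) r hrn i]
      have := i.isLt
      split_ifs <;> omega
  -- properties of the two layered permutations
  have props : ∀ a : ℕ, 1 ≤ a → a < s + r → (max a (s + r - a) = s) →
      (lisLen (layered (s + r) a) = 2 ∧ ldsLen (layered (s + r) a) = s ∧
        invCount (layered (s + r) a) = a.choose 2 + (s + r - a).choose 2) := by
    intro a h1 h2 h3
    exact ⟨lis_layered (s + r) a h1 h2, by rw [lds_layered (s + r) a h1 h2, h3],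
      inv_layered (s + r) a h2.le⟩
  have hmaxs : max s (s + r - s) = s := by
    have : s + r - s = r := by omega
    rw [this, max_eq_left hrs]
  have hmaxr : max r (s + r - r) = s := by
    have : s + r - r = s := by omega
    rw [this, max_eq_right hrs]
  have props_s := props s hs1 hsn' hmaxs
  have props_r := props r hr hrn' hmaxr
  have hinv_s : invCount (layered (s + r) s) = s.choose 2 + r.choose 2 := by
    rw [props_s.2.2]
    congr 1
    congr 1
    omega
  have hinv_r : invCount (layered (s + r) r) = s.choose 2 + r.choose 2 := by
    rw [props_r.2.2]
    have : s + r - r = s := by omega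
    rw [this, Nat.add_comm]
  have hEq : ∀ π : Equiv.Perm (Fin (s + r)),
      (lisLen π = 2 ∧ ldsLen π = s ∧ invCount π = s.choose 2 + r.choose 2) ↔
      (π = layered (s + r) s ∨ π = layered (s + r) r) := by
    intro π
    constructor
    · rintro ⟨h1, h2, h3⟩
      exact forward_struct s r hr hrs π h1 h2 h3
    · rintro (rfl | rfl)
      · exact ⟨props_s.1, props_s.2.1, hinv_s⟩
      · exact ⟨props_r.1, props_r.2.1, hinv_r⟩
  constructor
  · intro π
    rw [hEq π, fs π, fr π]
  · have hcongr : Nat.card {π : Equiv.Perm (Fin (s + r)) //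
        lisLen π = 2 ∧ ldsLen π = s ∧ invCount π = s.choose 2 + r.choose 2} =
        Nat.card ↥({layered (s + r) s, layered (s + r) r} : Set (Equiv.Perm (Fin (s + r)))) := by
      apply Nat.card_congr
      apply Equiv.subtypeEquivRight
      intro π
      rw [hEq π]
      simp [Set.mem_insert_iff]
    rw [hcongr, Nat.card_coe_set_eq]
    by_cases hsr : s = r
    · subst hsr
      rw [if_pos rfl, Set.pair_eq_singleton, Set.ncard_singleton]
    · rw [if_neg hsr]
      apply Set.ncard_pair
      intro hL
      have h0 : (0 : ℕ) < s + r := by omega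
      have := congrArg (fun e : Equiv.Perm (Fin (s + r)) => ((e ⟨0, h0⟩ : Fin (s + r)) : ℕ)) hL
      simp only [layered_val (s + r) s hsn, layered_val (s + r) r hrn] at this
      rw [if_pos (show ((⟨0, h0⟩ : Fin (s + r)) : ℕ) < s by show 0 < s; omega),
        if_pos (show ((⟨0, h0⟩ : Fin (s + r)) : ℕ) < r by show 0 < r; omega)] at this
      omega
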